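/- Let D ⊣ C : A ⇄ P be an adjunction between categories with pullbacks and σ : S → R a Galois descent morphism. If B_b → Q_q is a coequalizer in A/R of a parallel pair f, g : A_a ⇉ B_b whose image under σ* is a split coequalizer lying in the essential image of C_S : P/DS → A/S, then Q_q is σ-split; i.e. Split_R(σ) is closed in A/R under such coequalizers. -/

import Mathlib

open CategoryTheory Limits

/-- Unit is iso on the essential image of the right adjoint when the counit is iso. -/
lemma unit_iso_of_iso_to_obj {C D : Type*} [Category C] [Category D]
    {L : C ⥤ D} {Rf : D ⥤ C} (adj : L ⊣ Rf) (hcounit : IsIso adj.counit)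
    {Y : C} (X : D) (e : Y ≅ Rf.obj X) : IsIso (adj.unit.app Y) := by
  have h1 : IsIso (adj.unit.app (Rf.obj X)) := by
    have h2 : IsIso (Rf.map (adj.counit.app X)) := by
      have : IsIso (adj.counit.app X) := inferInstance
      infer_instance
    have h4 : IsIso (adj.unit.app (Rf.obj X) ≫ Rf.map (adj.counit.app X)) := by
      rw [adj.right_triangle_components]; exact IsIso.id _
    exact IsIso.of_isIso_comp_right _ (Rf.map (adj.counit.app X))
  have hnat : e.hom ≫ adj.unit.app (Rf.obj X) = adj.unit.app Y ≫ (L ⋙ Rf).map e.hom := by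
    simpa using adj.unit.naturality e.hom
  have heq : adj.unit.app Y = e.hom ≫ adj.unit.app (Rf.obj X) ≫ ((L ⋙ Rf).map e.inv) := by
    rw [← Category.assoc, hnat, Category.assoc, ← Functor.map_comp, e.hom_inv_id]
    simp
  rw [heq]; infer_instance

/-- Let `F ⊣ U : A ⇄ P` be an adjunction between categories with
pullbacks and `σ : S ⟶ R` a Galois descent morphism.  If `n : B_b ⟶ Q_q` is a
coequalizer in `A/R` of a parallel pair `f, g : A_a ⇉ B_b` whose image under
`σ* = Over.pullback σ` is a split coequalizer with `σ*A_a` and `σ*B_b` lying in the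
essential image of `U_S : P/FS ⥤ A/S`, then `Q_q` is `σ`-split; i.e. `Split_R(σ)` is
closed in `A/R` under such coequalizers. -/
theorem stmt16 {A P : Type*} [Category A] [Category P] [HasPullbacks A] [HasPullbacks P]
    (F : A ⥤ P) (U : P ⥤ A) (adj : F ⊣ U) {S R : A} (σ : S ⟶ R)
    (US : Over (F.obj S) ⥤ Over S)
    (adjS : (Over.post F : Over S ⥤ Over (F.obj S)) ⊣ US)
    [MonadicRightAdjoint (Over.pullback σ)]
    (hcounit : IsIso adjS.counit)
    (hsplit : ∀ X : Over (F.obj S),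
      IsIso (adjS.unit.app ((Over.pullback σ).obj ((Over.map σ).obj (US.obj X)))))
    {Aa Bb Qq : Over R} (f g : Aa ⟶ Bb) (n : Bb ⟶ Qq) (w : f ≫ n = g ≫ n)
    (hcoeq : Nonempty (IsColimit (Cofork.ofπ n w)))
    (hsplitcoeq : Nonempty
      (IsSplitCoequalizer ((Over.pullback σ).map f) ((Over.pullback σ).map g)
        ((Over.pullback σ).map n)))
    (hA : ∃ X : Over (F.obj S), Nonempty ((Over.pullback σ).obj Aa ≅ US.obj X))
    (hB : ∃ X : Over (F.obj S), Nonempty ((Over.pullback σ).obj Bb ≅ US.obj X)) :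
    IsIso (adjS.unit.app ((Over.pullback σ).obj Qq)) := by
  obtain ⟨s⟩ := hsplitcoeq
  obtain ⟨XA, ⟨eA⟩⟩ := hA
  obtain ⟨XB, ⟨eB⟩⟩ := hB
  set G : Over S ⥤ Over S := Over.post F ⋙ US with hG
  set f' := (Over.pullback σ).map f
  set g' := (Over.pullback σ).map g
  set n' := (Over.pullback σ).map n
  have hiA : IsIso (adjS.unit.app ((Over.pullback σ).obj Aa)) :=
    unit_iso_of_iso_to_obj adjS hcounit XA eA
  have hiB : IsIso (adjS.unit.app ((Over.pullback σ).obj Bb)) :=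
    unit_iso_of_iso_to_obj adjS hcounit XB eB
  -- the two coequalizer diagrams
  have hc1 : IsColimit (Cofork.ofπ n' s.condition) := s.isCoequalizer
  have s2 := s.map G
  have hc2 : IsColimit (Cofork.ofπ (G.map n') s2.condition) := s2.isCoequalizer
  -- iso of parallel pairs given by unit components
  have nat1 : f' ≫ adjS.unit.app _ = adjS.unit.app _ ≫ G.map f' := adjS.unit.naturality f'
  have nat2 : g' ≫ adjS.unit.app _ = adjS.unit.app _ ≫ G.map g' := adjS.unit.naturality g'
  have natn : n' ≫ adjS.unit.app _ = adjS.unit.app _ ≫ G.map n' := adjS.unit.naturality n'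
  let i : parallelPair f' g' ≅ parallelPair (G.map f') (G.map g') :=
    parallelPair.ext (asIso (adjS.unit.app ((Over.pullback σ).obj Aa)))
      (asIso (adjS.unit.app ((Over.pullback σ).obj Bb)))
      nat1 nat2
  let e : (Over.pullback σ).obj Qq ≅ G.obj ((Over.pullback σ).obj Qq) :=
    IsColimit.coconePointsIsoOfNatIso hc1 hc2 i
  have hepi : Epi n' := by
    constructor
    intro Z u v huv
    exact Cofork.IsColimit.hom_ext hc1 (by simpa using huv)
  have key : adjS.unit.app ((Over.pullback σ).obj Qq) = e.hom := by
    rw [← cancel_epi n']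
    have := IsColimit.comp_coconePointsIsoOfNatIso_hom hc1 hc2 i WalkingParallelPair.one
    simp only [Cofork.ofπ_ι_app] at this
    calc n' ≫ adjS.unit.app _ = adjS.unit.app _ ≫ G.map n' := natn
      _ = n' ≫ e.hom := by
          rw [show adjS.unit.app ((Over.pullback σ).obj Bb) =
            i.hom.app WalkingParallelPair.one from rfl]
          exact this.symm
  rw [key]
  infer_instance
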